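/- A De Morgan clone C with DMA ⊆ C contains a unary non-persistent function if and only if C contains one of the unary functions □, id_{n↦t}, id_{b↦t}. Moreover, C contains a unary function which is harmonious and non-persistent if and only if C contains □. -/

import Mathlib

set_option autoImplicit false

/-- The four truth values of the Belnap–Dunn logic. -/
inductive DM4 : Type
  | t
  | f
  | n
  | b
deriving DecidableEq

namespace DM4

/-- De Morgan negation. -/
def neg : DM4 → DM4
  | t => f
  | f => t
  | n => n
  | b => b

/-- Conflation. -/
def conf : DM4 → DM4
  | t => t
  | f => f
  | n => b
  | b => n

/-- Meet in the truth order. -/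
def meet : DM4 → DM4 → DM4
  | f, _ => f
  | _, f => f
  | t, y => y
  | x, t => x
  | n, n => n
  | b, b => b
  | n, b => f
  | b, n => f

/-- Join in the truth order. -/
def join : DM4 → DM4 → DM4
  | t, _ => t
  | _, t => t
  | f, y => y
  | x, f => x
  | n, n => n
  | b, b => b
  | n, b => t
  | b, n => t

/-- Meet in the information order (⊗). -/
def imeet : DM4 → DM4 → DM4
  | n, _ => n
  | _, n => n
  | b, y => y
  | x, b => x
  | t, t => t
  | f, f => f
  | t, f => n
  | f, t => n

/-- Join in the information order (⊕). -/
def ijoin : DM4 → DM4 → DM4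
  | b, _ => b
  | _, b => b
  | n, y => y
  | x, n => x
  | t, t => t
  | f, f => f
  | t, f => b
  | f, t => b

/-- The truth order: least element `f`, greatest element `t`, with `n`, `b` incomparable. -/
def tle (x y : DM4) : Prop := x = y ∨ x = f ∨ y = t

/-- The information order: least element `n`, greatest element `b`, with `t`, `f` incomparable. -/
def ile (x y : DM4) : Prop := x = y ∨ x = n ∨ y = b

/-- □: maps t to t and everything else to f. -/
def box : DM4 → DM4
  | t => t
  | _ => f

/-- ◇: maps f to f and everything else to t. -/
def diamond : DM4 → DM4
  | f => f
  | _ => t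

/-- Δ: maps t, b to t and n, f to f. -/
def delta : DM4 → DM4
  | t => t
  | b => t
  | _ => f

/-- ∇: maps t, n to t and b, f to f. -/
def nabla : DM4 → DM4
  | t => t
  | n => t
  | _ => f

/-- id_{b↦n}: maps b to n and fixes t, f, n. -/
def idbn : DM4 → DM4
  | b => n
  | x => x

/-- id_{n↦b}: maps n to b and fixes t, f, b. -/
def idnb : DM4 → DM4
  | n => b
  | x => x

/-- id_{n↦t}: maps n to t and fixes t, f, b. -/
def idnt : DM4 → DM4
  | n => t
  | x => x

/-- id_{b↦t}: maps b to t and fixes t, f, n. -/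
def idbt : DM4 → DM4
  | b => t
  | x => x

/-- t_{n↦n}: maps n to n and everything else to t. -/
def tnn : DM4 → DM4
  | n => n
  | _ => t

/-- t_{b↦b}: maps b to b and everything else to t. -/
def tbb : DM4 → DM4
  | b => b
  | _ => t

/-- The binary function pbp²₁. -/
def pbp1 : DM4 → DM4 → DM4
  | t, t => t | t, f => f | t, n => f | t, b => b
  | f, t => t | f, f => f | f, n => f | f, b => b
  | n, t => t | n, f => f | n, n => n | n, b => b
  | b, t => b | b, f => f | b, n => f | b, b => b

/-- The binary function pbp²₂. -/
def pbp2 : DM4 → DM4 → DM4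
  | t, t => t | t, f => f | t, n => n | t, b => f
  | f, t => t | f, f => f | f, n => n | f, b => f
  | n, t => n | n, f => f | n, n => n | n, b => f
  | b, t => t | b, f => f | b, n => n | b, b => b

/-- The binary function mnh²₁. -/
def mnh1 : DM4 → DM4 → DM4
  | t, t => f | t, f => f | t, n => n | t, b => b
  | f, t => f | f, f => f | f, n => n | f, b => b
  | n, t => f | n, f => f | n, n => n | n, b => f
  | b, t => f | b, f => f | b, n => n | b, b => b

/-- The binary function mnh²₂. -/
def mnh2 : DM4 → DM4 → DM4
  | t, t => f | t, f => f | t, n => n | t, b => b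
  | f, t => f | f, f => f | f, n => n | f, b => b
  | n, t => f | n, f => f | n, n => n | n, b => b
  | b, t => f | b, f => f | b, n => f | b, b => b

/-- The binary function mhnp². -/
def mhnp2 : DM4 → DM4 → DM4
  | t, _ => t
  | f, _ => t
  | n, b => f
  | n, _ => n
  | b, n => f
  | b, _ => b

/-- The binary function mnp²₁. -/
def mnp1 : DM4 → DM4 → DM4
  | t, b => b
  | t, _ => t
  | f, b => b
  | f, _ => t
  | n, b => f
  | n, _ => n
  | b, n => f
  | b, _ => b

/-- The binary function mnp²₂. -/
def mnp2 : DM4 → DM4 → DM4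
  | t, _ => t
  | f, _ => t
  | n, _ => n
  | b, n => f
  | b, _ => b

/-- The binary function mnp²₃. -/
def mnp3 : DM4 → DM4 → DM4
  | t, n => n
  | t, _ => t
  | f, n => n
  | f, _ => t
  | n, b => f
  | n, _ => n
  | b, n => f
  | b, _ => b

/-- The binary function mnp²₄. -/
def mnp4 : DM4 → DM4 → DM4
  | t, _ => t
  | f, _ => t
  | n, b => f
  | n, _ => n
  | b, _ => b

/-- The ternary function mhnp³. -/
def mhnp3 : DM4 → DM4 → DM4 → DM4
  | _, t, _ => f
  | _, f, _ => f
  | t, n, _ => n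
  | f, n, _ => f
  | b, n, _ => f
  | n, n, b => f
  | n, n, _ => n
  | t, b, _ => b
  | f, b, _ => f
  | n, b, _ => f
  | b, b, n => f
  | b, b, _ => b

/-- The set of designated values. -/
def Des : Set DM4 := {t, b}

/-- Designatedness as a Boolean predicate. -/
def des : DM4 → Bool
  | t => true
  | b => true
  | _ => false

/-- The protoimplication →_{t-max}. -/
def tmax (x y : DM4) : DM4 :=
  match des x, des y with
  | true, false => n
  | _, _ => t

/-- The protoimplication →_{i-max}. -/
def imax (x y : DM4) : DM4 :=
  match des x, des y with
  | true, false => f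
  | _, _ => b

/-- The protoimplication ↔_{t-min}. -/
def tmin (x y : DM4) : DM4 := if x = y then b else f

/-- The protoimplication ↔_{i-min}. -/
def imin (x y : DM4) : DM4 := if x = y then t else n

/-- A binary operation is a protoimplication if it satisfies Reflexivity and Modus Ponens
with respect to the designated set {t, b}. -/
def IsProtoimplication (r : DM4 → DM4 → DM4) : Prop :=
  (∀ a : DM4, r a a ∈ Des) ∧ ∀ a c : DM4, a ∈ Des → r a c ∈ Des → c ∈ Des

/-- `DMFun k` is the type of De Morgan functions of arity `k + 1` (arities are positive). -/
abbrev DMFun (k : ℕ) : Type := (Fin (k + 1) → DM4) → DM4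

/-- Membership in the clone generated by the family of operations `S`
(`S k` is the set of generators of arity `k + 1`). -/
inductive InClone (S : ∀ k : ℕ, Set (DMFun k)) : ∀ k : ℕ, DMFun k → Prop
  | base {k : ℕ} {g : DMFun k} : g ∈ S k → InClone S k g
  | proj {k : ℕ} (i : Fin (k + 1)) : InClone S k (fun x => x i)
  | comp {k m : ℕ} {g : DMFun m} {h : Fin (m + 1) → DMFun k} :
      InClone S m g → (∀ i, InClone S k (h i)) →
      InClone S k (fun x => g (fun i => h i x))

/-- A family of sets of De Morgan functions is a clone if it contains all projections
and is closed under composition. -/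
structure IsClone (C : ∀ k : ℕ, Set (DMFun k)) : Prop where
  proj : ∀ (k : ℕ) (i : Fin (k + 1)), (fun x => x i) ∈ C k
  comp : ∀ (k m : ℕ) (g : DMFun m) (h : Fin (m + 1) → DMFun k),
      g ∈ C m → (∀ i, h i ∈ C k) → (fun x => g (fun i => h i x)) ∈ C k

/-- The generating family consisting of a single unary operation. -/
def op1 (g : DM4 → DM4) : ∀ k : ℕ, Set (DMFun k)
  | 0 => {fun x => g (x 0)}
  | _ + 1 => ∅

/-- The generating family consisting of a single binary operation. -/
def op2 (g : DM4 → DM4 → DM4) : ∀ k : ℕ, Set (DMFun k)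
  | 1 => {fun x => g (x 0) (x 1)}
  | _ => ∅

/-- The generating family consisting of a single ternary operation. -/
def op3 (g : DM4 → DM4 → DM4 → DM4) : ∀ k : ℕ, Set (DMFun k)
  | 2 => {fun x => g (x 0) (x 1) (x 2)}
  | _ => ∅

/-- Union of two families of operations. -/
def funion (S T : ∀ k : ℕ, Set (DMFun k)) : ∀ k : ℕ, Set (DMFun k) := fun k => S k ∪ T k

infixr:65 " ⊹ " => funion

/-- The generators of DLat: ∧, ∨, t, f (constants as unary constant functions). -/
def DLatGen : ∀ k : ℕ, Set (DMFun k) :=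
  op2 meet ⊹ op2 join ⊹ op1 (fun _ => t) ⊹ op1 (fun _ => f)

/-- The generators of DMA: ∧, ∨, t, f, −. -/
def DMAGen : ∀ k : ℕ, Set (DMFun k) := DLatGen ⊹ op1 neg

/-- The generators of BiLat: ∧, ∨, t, f, ⊗, ⊕, n, b. -/
def BiLatGen : ∀ k : ℕ, Set (DMFun k) :=
  DLatGen ⊹ op2 imeet ⊹ op2 ijoin ⊹ op1 (fun _ => n) ⊹ op1 (fun _ => b)

/-- A De Morgan function is harmonious if it commutes with conflation. -/
def Harmonious {k : ℕ} (g : DMFun k) : Prop :=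
  ∀ x : Fin (k + 1) → DM4, g (fun i => conf (x i)) = conf (g x)

/-- A De Morgan function is positive if it is monotone in the componentwise truth order. -/
def Positive {k : ℕ} (g : DMFun k) : Prop :=
  ∀ x y : Fin (k + 1) → DM4, (∀ i, tle (x i) (y i)) → tle (g x) (g y)

/-- A De Morgan function is persistent if it is monotone in the componentwise
information order. -/
def Persistent {k : ℕ} (g : DMFun k) : Prop :=
  ∀ x y : Fin (k + 1) → DM4, (∀ i, ile (x i) (y i)) → ile (g x) (g y)

/-- A De Morgan function preserves a subset X of DM4 if it maps tuples from X into X. -/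
def Preserves {k : ℕ} (g : DMFun k) (X : Set DM4) : Prop :=
  ∀ x : Fin (k + 1) → DM4, (∀ i, x i ∈ X) → g x ∈ X

def B2 : Set DM4 := {t, f}
def K3 : Set DM4 := {t, n, f}
def P3 : Set DM4 := {t, b, f}

/-- A unary operation as a De Morgan function. -/
def toF1 (g : DM4 → DM4) : DMFun 0 := fun x => g (x 0)

/-- A binary operation as a De Morgan function. -/
def toF2 (g : DM4 → DM4 → DM4) : DMFun 1 := fun x => g (x 0) (x 1)

/-- A ternary operation as a De Morgan function. -/
def toF3 (g : DM4 → DM4 → DM4 → DM4) : DMFun 2 := fun x => g (x 0) (x 1) (x 2)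

/-- The clone generated by a family of operations, as a family of sets. -/
def CloneOf (S : ∀ k : ℕ, Set (DMFun k)) : ∀ k : ℕ, Set (DMFun k) :=
  fun k => {g | InClone S k g}

/-- Inclusion of families of operations. -/
def CloneLE (C D : ∀ k : ℕ, Set (DMFun k)) : Prop := ∀ k : ℕ, C k ⊆ D k



instance : Fintype DM4 :=
  ⟨⟨{DM4.t, DM4.f, DM4.n, DM4.b}, by decide⟩, fun x => by cases x <;> decide⟩

instance (x y : DM4) : Decidable (ile x y) :=
  inferInstanceAs (Decidable (x = y ∨ x = n ∨ y = b))

/-- Table of a unary De Morgan function. -/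
def tbl (vt vf vn vb : DM4) : DM4 → DM4
  | .t => vt
  | .f => vf
  | .n => vn
  | .b => vb

/-- Unary persistence. -/
abbrev pers1 (g : DM4 → DM4) : Prop := ∀ a c : DM4, ile a c → ile (g a) (g c)

/-- Unary harmoniousness. -/
abbrev harm1 (g : DM4 → DM4) : Prop := ∀ a : DM4, g (conf a) = conf (g a)

/-- Derivation expressions over DMA plus a unary generator G. -/
inductive E : Type
  | id | eneg | ct | cf | G
  | comp (a b : E) | emeet (a b : E) | ejoin (a b : E)

def E.eval (g : DM4 → DM4) : E → (DM4 → DM4)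
  | .id => fun a => a
  | .eneg => DM4.neg
  | .ct => fun _ => DM4.t
  | .cf => fun _ => DM4.f
  | .G => g
  | .comp e1 e2 => fun x => E.eval g e1 (E.eval g e2 x)
  | .emeet e1 e2 => fun x => DM4.meet (E.eval g e1 x) (E.eval g e2 x)
  | .ejoin e1 e2 => fun x => DM4.join (E.eval g e1 x) (E.eval g e2 x)

section Mem
set_option linter.unusedSectionVars false
variable {C : ∀ k : ℕ, Set (DMFun k)} (hC : IsClone C)
    (hDMA : ∀ k g, InClone DMAGen k g → g ∈ C k)
include hDMA hC

lemma memNeg : toF1 neg ∈ C 0 := hDMA 0 _ (.base (Or.inr rfl))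

lemma memCt : toF1 (fun _ => DM4.t) ∈ C 0 :=
  hDMA 0 _ (.base (Or.inl (Or.inr (Or.inr (Or.inl rfl)))))

lemma memCf : toF1 (fun _ => DM4.f) ∈ C 0 :=
  hDMA 0 _ (.base (Or.inl (Or.inr (Or.inr (Or.inr rfl)))))

lemma memMeet2 : toF2 meet ∈ C 1 := hDMA 1 _ (.base (Or.inl (Or.inl rfl)))

lemma memJoin2 : toF2 join ∈ C 1 := hDMA 1 _ (.base (Or.inl (Or.inr (Or.inl rfl))))

lemma memComp {h1 h2 : DM4 → DM4} (m1 : toF1 h1 ∈ C 0) (m2 : toF1 h2 ∈ C 0) :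
    toF1 (fun a => h1 (h2 a)) ∈ C 0 :=
  hC.comp 0 0 (toF1 h1) (fun _ => toF1 h2) m1 (fun _ => m2)

lemma memMeetP {h1 h2 : DM4 → DM4} (m1 : toF1 h1 ∈ C 0) (m2 : toF1 h2 ∈ C 0) :
    toF1 (fun a => meet (h1 a) (h2 a)) ∈ C 0 :=
  hC.comp 0 1 (toF2 meet) (fun i => if i.val = 0 then toF1 h1 else toF1 h2)
    (memMeet2 hC hDMA) (fun i => by split <;> [exact m1; exact m2])

lemma memJoinP {h1 h2 : DM4 → DM4} (m1 : toF1 h1 ∈ C 0) (m2 : toF1 h2 ∈ C 0) :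
    toF1 (fun a => join (h1 a) (h2 a)) ∈ C 0 :=
  hC.comp 0 1 (toF2 join) (fun i => if i.val = 0 then toF1 h1 else toF1 h2)
    (memJoin2 hC hDMA) (fun i => by split <;> [exact m1; exact m2])

lemma memEval (g : DM4 → DM4) (hg : toF1 g ∈ C 0) : ∀ e : E, toF1 (E.eval g e) ∈ C 0 := by
  intro e
  induction e with
  | id => exact hC.proj 0 0
  | eneg => exact memNeg hC hDMA
  | ct => exact memCt hC hDMA
  | cf => exact memCf hC hDMA
  | G => exact hg
  | comp e1 e2 ih1 ih2 => exact memComp hC hDMA (h1 := E.eval g e1) (h2 := E.eval g e2) ih1 ih2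
  | emeet e1 e2 ih1 ih2 => exact memMeetP hC hDMA (h1 := E.eval g e1) (h2 := E.eval g e2) ih1 ih2
  | ejoin e1 e2 ih1 ih2 => exact memJoinP hC hDMA (h1 := E.eval g e1) (h2 := E.eval g e2) ih1 ih2

omit hDMA hC in
lemma memCongr {h1 h2 : DM4 → DM4} (he : ∀ a, h1 a = h2 a) (m : toF1 h1 ∈ C 0) :
    toF1 h2 ∈ C 0 := by
  rwa [show h1 = h2 from funext he] at m

end Mem

def pickA : DM4 → DM4 → DM4 → DM4 → E
  | .t, .t, .t, .f => (E.ejoin E.id (E.comp E.eneg E.G))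
  | .t, .t, .t, .n => (E.ejoin E.id (E.comp E.eneg E.G))
  | .t, .t, .f, .t => (E.ejoin E.id (E.comp E.eneg E.G))
  | .t, .t, .f, .f => (E.emeet E.id E.G)
  | .t, .t, .f, .n => (E.emeet E.id E.G)
  | .t, .t, .f, .b => (E.ejoin E.id (E.comp E.eneg E.G))
  | .t, .t, .n, .f => (E.ejoin E.id (E.comp E.eneg E.G))
  | .t, .t, .n, .n => (E.ejoin E.id (E.comp E.eneg E.G))
  | .t, .t, .b, .t => (E.ejoin E.id (E.comp E.eneg E.G))
  | .t, .t, .b, .f => (E.emeet E.id E.G)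
  | .t, .t, .b, .n => (E.emeet E.id E.G)
  | .t, .t, .b, .b => (E.ejoin E.id (E.comp E.eneg E.G))
  | .t, .f, .t, .t => (E.comp E.eneg (E.comp E.G E.eneg))
  | .t, .f, .t, .f => (E.comp E.eneg (E.ejoin (E.comp E.eneg E.G) (E.comp E.G E.eneg)))
  | .t, .f, .t, .n => (E.comp (E.comp E.eneg E.G) (E.comp E.G E.eneg))
  | .t, .f, .t, .b => E.G
  | .t, .f, .f, .t => (E.comp E.eneg (E.ejoin (E.comp E.eneg E.G) (E.comp E.G E.eneg)))
  | .t, .f, .f, .f => E.G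
  | .t, .f, .f, .n => (E.emeet E.id E.G)
  | .t, .f, .f, .b => (E.comp E.eneg (E.comp E.G E.eneg))
  | .t, .f, .n, .t => E.G
  | .t, .f, .n, .f => (E.comp E.eneg (E.comp E.G E.eneg))
  | .t, .f, .n, .n => (E.ejoin E.id E.G)
  | .t, .f, .b, .t => (E.comp (E.comp E.eneg E.G) (E.comp E.G E.eneg))
  | .t, .f, .b, .f => (E.emeet E.id E.G)
  | .t, .f, .b, .n => (E.emeet E.id E.G)
  | .t, .f, .b, .b => (E.ejoin E.id E.G)
  | .t, .n, .t, .t => (E.ejoin E.id (E.comp (E.comp E.eneg E.G) (E.comp E.eneg E.G)))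
  | .t, .n, .t, .f => (E.ejoin E.id (E.comp E.eneg (E.comp E.G E.eneg)))
  | .t, .n, .t, .n => (E.ejoin E.id (E.comp E.eneg (E.comp E.G E.eneg)))
  | .t, .n, .t, .b => (E.ejoin E.id (E.comp (E.comp E.eneg E.G) (E.emeet E.eneg (E.comp E.G E.cf))))
  | .t, .n, .f, .t => (E.emeet E.G (E.comp (E.comp E.eneg E.G) (E.comp E.G E.eneg)))
  | .t, .n, .f, .f => (E.emeet E.id E.G)
  | .t, .n, .f, .n => (E.emeet E.id E.G)
  | .t, .n, .f, .b => (E.comp (E.comp E.eneg (E.comp E.G E.eneg)) (E.emeet (E.emeet E.id E.G) (E.comp E.G E.cf)))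
  | .t, .n, .n, .f => (E.ejoin E.id (E.comp E.eneg (E.comp E.G E.eneg)))
  | .t, .n, .n, .n => (E.ejoin E.id (E.comp E.eneg (E.comp E.G E.eneg)))
  | .t, .n, .b, .t => (E.comp (E.comp E.eneg (E.emeet E.id E.G)) (E.ejoin E.eneg (E.comp E.G E.eneg)))
  | .t, .n, .b, .f => (E.emeet E.id E.G)
  | .t, .n, .b, .n => (E.emeet E.id E.G)
  | .t, .n, .b, .b => (E.comp (E.comp E.eneg (E.emeet E.id E.G)) (E.ejoin (E.comp E.G E.eneg) (E.comp E.G E.cf)))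
  | .t, .b, .t, .t => (E.ejoin E.id (E.comp (E.comp E.eneg E.G) (E.comp E.eneg E.G)))
  | .t, .b, .t, .f => (E.emeet E.G (E.comp (E.comp E.eneg E.G) (E.comp E.G E.eneg)))
  | .t, .b, .t, .n => (E.comp (E.comp E.eneg (E.emeet E.id E.G)) (E.ejoin E.eneg (E.comp E.G E.eneg)))
  | .t, .b, .f, .t => (E.ejoin E.id (E.comp E.eneg (E.comp E.G E.eneg)))
  | .t, .b, .f, .f => (E.emeet E.id E.G)
  | .t, .b, .f, .n => (E.emeet E.id E.G)
  | .t, .b, .f, .b => (E.ejoin E.id (E.comp E.eneg (E.comp E.G E.eneg)))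
  | .t, .b, .n, .t => (E.ejoin E.id (E.comp (E.comp E.eneg E.G) (E.emeet E.eneg (E.comp E.G E.cf))))
  | .t, .b, .n, .f => (E.comp (E.comp E.eneg (E.comp E.G E.eneg)) (E.emeet (E.emeet E.id E.G) (E.comp E.G E.cf)))
  | .t, .b, .n, .n => (E.comp (E.comp E.eneg (E.emeet E.id E.G)) (E.ejoin (E.comp E.G E.eneg) (E.comp E.G E.cf)))
  | .t, .b, .b, .t => (E.ejoin E.id (E.comp E.eneg (E.comp E.G E.eneg)))
  | .t, .b, .b, .f => (E.emeet E.id E.G)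
  | .t, .b, .b, .n => (E.emeet E.id E.G)
  | .t, .b, .b, .b => (E.ejoin E.id (E.comp E.eneg (E.comp E.G E.eneg)))
  | .f, .t, .t, .t => (E.comp E.eneg E.G)
  | .f, .t, .t, .f => (E.comp E.G (E.ejoin E.eneg E.G))
  | .f, .t, .t, .n => (E.emeet E.id (E.comp E.eneg E.G))
  | .f, .t, .t, .b => (E.comp E.G E.eneg)
  | .f, .t, .f, .t => (E.comp E.G (E.ejoin E.eneg E.G))
  | .f, .t, .f, .f => (E.comp E.G E.eneg)
  | .f, .t, .f, .n => (E.emeet E.id (E.comp E.G E.eneg))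
  | .f, .t, .f, .b => (E.comp E.eneg E.G)
  | .f, .t, .n, .t => (E.comp E.G E.eneg)
  | .f, .t, .n, .f => (E.comp E.eneg E.G)
  | .f, .t, .n, .n => (E.ejoin E.id (E.comp E.eneg E.G))
  | .f, .t, .b, .t => (E.emeet E.id (E.comp E.eneg E.G))
  | .f, .t, .b, .f => (E.emeet E.id (E.comp E.G E.eneg))
  | .f, .t, .b, .n => (E.emeet E.id (E.comp E.eneg E.G))
  | .f, .t, .b, .b => (E.ejoin E.id (E.comp E.eneg E.G))
  | .f, .f, .t, .t => (E.emeet E.id (E.comp E.eneg E.G))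
  | .f, .f, .t, .f => (E.ejoin E.id E.G)
  | .f, .f, .t, .n => (E.emeet E.id (E.comp E.eneg E.G))
  | .f, .f, .t, .b => (E.ejoin E.id E.G)
  | .f, .f, .f, .t => (E.ejoin E.id E.G)
  | .f, .f, .f, .n => (E.ejoin E.id E.G)
  | .f, .f, .n, .t => (E.ejoin E.id E.G)
  | .f, .f, .n, .n => (E.ejoin E.id E.G)
  | .f, .f, .b, .t => (E.emeet E.id (E.comp E.eneg E.G))
  | .f, .f, .b, .f => (E.ejoin E.id E.G)
  | .f, .f, .b, .n => (E.emeet E.id (E.comp E.eneg E.G))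
  | .f, .f, .b, .b => (E.ejoin E.id E.G)
  | .f, .n, .t, .t => (E.emeet E.id (E.comp E.eneg E.G))
  | .f, .n, .t, .f => (E.emeet E.id (E.comp E.G (E.comp E.G E.eneg)))
  | .f, .n, .t, .n => (E.emeet E.id (E.comp E.eneg E.G))
  | .f, .n, .t, .b => (E.comp E.G (E.ejoin (E.ejoin E.eneg E.G) (E.comp E.G E.cf)))
  | .f, .n, .f, .t => (E.ejoin E.id (E.comp E.G E.eneg))
  | .f, .n, .f, .f => (E.ejoin E.id (E.comp E.G E.G))
  | .f, .n, .f, .n => (E.ejoin E.id (E.comp E.G E.eneg))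
  | .f, .n, .f, .b => (E.ejoin E.id (E.comp E.G (E.emeet E.eneg (E.comp E.G E.cf))))
  | .f, .n, .n, .t => (E.ejoin E.id (E.comp E.G E.eneg))
  | .f, .n, .n, .n => (E.ejoin E.id (E.comp E.G E.eneg))
  | .f, .n, .b, .t => (E.emeet E.id (E.comp E.eneg E.G))
  | .f, .n, .b, .f => (E.emeet E.id (E.comp (E.ejoin E.id E.G) (E.comp E.G E.eneg)))
  | .f, .n, .b, .n => (E.emeet E.id (E.comp E.eneg E.G))
  | .f, .n, .b, .b => (E.comp (E.ejoin E.eneg E.G) (E.ejoin (E.ejoin E.eneg E.G) (E.comp E.G E.cf)))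
  | .f, .b, .t, .t => (E.emeet E.id (E.comp E.eneg E.G))
  | .f, .b, .t, .f => (E.ejoin E.id (E.comp E.G E.eneg))
  | .f, .b, .t, .n => (E.emeet E.id (E.comp E.eneg E.G))
  | .f, .b, .t, .b => (E.ejoin E.id (E.comp E.G E.eneg))
  | .f, .b, .f, .t => (E.emeet E.id (E.comp E.G (E.comp E.G E.eneg)))
  | .f, .b, .f, .f => (E.ejoin E.id (E.comp E.G E.G))
  | .f, .b, .f, .n => (E.emeet E.id (E.comp (E.ejoin E.id E.G) (E.comp E.G E.eneg)))
  | .f, .b, .n, .t => (E.comp E.G (E.ejoin (E.ejoin E.eneg E.G) (E.comp E.G E.cf)))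
  | .f, .b, .n, .f => (E.ejoin E.id (E.comp E.G (E.emeet E.eneg (E.comp E.G E.cf))))
  | .f, .b, .n, .n => (E.comp (E.ejoin E.eneg E.G) (E.ejoin (E.ejoin E.eneg E.G) (E.comp E.G E.cf)))
  | .f, .b, .b, .t => (E.emeet E.id (E.comp E.eneg E.G))
  | .f, .b, .b, .f => (E.ejoin E.id (E.comp E.G E.eneg))
  | .f, .b, .b, .n => (E.emeet E.id (E.comp E.eneg E.G))
  | .f, .b, .b, .b => (E.ejoin E.id (E.comp E.G E.eneg))
  | .n, .t, .t, .t => (E.ejoin E.id (E.comp (E.comp E.eneg E.G) (E.comp E.G E.eneg)))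
  | .n, .t, .t, .f => (E.ejoin E.id (E.comp E.eneg E.G))
  | .n, .t, .t, .n => (E.ejoin E.id (E.comp E.eneg E.G))
  | .n, .t, .t, .b => (E.ejoin E.id (E.comp (E.comp E.eneg E.G) (E.ejoin E.id (E.comp E.G E.ct))))
  | .n, .t, .f, .t => (E.comp (E.comp E.eneg E.G) (E.emeet E.id E.G))
  | .n, .t, .f, .f => (E.emeet E.id (E.comp E.G E.eneg))
  | .n, .t, .f, .n => (E.emeet E.id (E.comp E.G E.eneg))
  | .n, .t, .f, .b => (E.comp (E.comp E.eneg E.G) (E.emeet (E.emeet E.id E.G) (E.comp E.G E.ct)))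
  | .n, .t, .n, .f => (E.ejoin E.id (E.comp E.eneg E.G))
  | .n, .t, .n, .n => (E.ejoin E.id (E.comp E.eneg E.G))
  | .n, .t, .b, .t => (E.comp (E.emeet E.eneg E.G) (E.comp (E.emeet E.id E.G) (E.ejoin E.eneg E.G)))
  | .n, .t, .b, .f => (E.emeet E.id (E.comp E.G E.eneg))
  | .n, .t, .b, .n => (E.emeet E.id (E.comp E.G E.eneg))
  | .n, .t, .b, .b => (E.comp (E.ejoin E.id (E.comp E.eneg E.G)) (E.emeet (E.emeet E.id E.G) (E.comp E.G E.ct)))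
  | .n, .f, .t, .t => (E.comp (E.comp E.G E.eneg) (E.ejoin E.eneg E.G))
  | .n, .f, .t, .f => (E.comp (E.comp E.G E.eneg) (E.ejoin E.eneg E.G))
  | .n, .f, .t, .n => (E.comp (E.comp E.G E.eneg) (E.ejoin E.eneg E.G))
  | .n, .f, .t, .b => (E.comp (E.comp E.G E.eneg) (E.ejoin (E.ejoin E.eneg E.G) (E.comp E.G E.ct)))
  | .n, .f, .f, .t => (E.ejoin E.id E.G)
  | .n, .f, .f, .f => (E.ejoin E.id (E.comp (E.comp E.G E.eneg) (E.comp E.G E.eneg)))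
  | .n, .f, .f, .n => (E.ejoin E.id E.G)
  | .n, .f, .f, .b => (E.ejoin E.id (E.comp E.G (E.ejoin E.id (E.comp E.G E.ct))))
  | .n, .f, .n, .t => (E.ejoin E.id E.G)
  | .n, .f, .n, .n => (E.ejoin E.id E.G)
  | .n, .f, .b, .t => (E.emeet E.id (E.comp E.eneg (E.comp E.G E.eneg)))
  | .n, .f, .b, .f => (E.ejoin (E.emeet E.id E.G) (E.comp E.G E.G))
  | .n, .f, .b, .n => (E.comp (E.ejoin E.id E.G) (E.emeet E.id E.G))
  | .n, .f, .b, .b => (E.comp (E.ejoin E.id E.G) (E.emeet E.G (E.comp E.G E.ct)))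
  | .n, .n, .t, .t => (E.ejoin E.id (E.comp E.eneg (E.comp E.G E.G)))
  | .n, .n, .t, .f => (E.ejoin E.id (E.comp E.eneg (E.comp E.G E.G)))
  | .n, .n, .t, .n => (E.ejoin E.id (E.comp (E.comp E.eneg E.G) (E.ejoin E.id E.G)))
  | .n, .n, .t, .b => (E.ejoin E.id (E.comp (E.comp E.eneg E.G) (E.ejoin E.id (E.comp E.G E.ct))))
  | .n, .n, .f, .t => (E.ejoin E.id (E.comp E.G E.G))
  | .n, .n, .f, .f => (E.ejoin E.id (E.comp E.G E.G))
  | .n, .n, .f, .n => (E.ejoin E.id (E.comp E.G (E.ejoin E.id E.G)))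
  | .n, .n, .f, .b => (E.ejoin E.id (E.comp E.G (E.ejoin E.id (E.comp E.G E.ct))))
  | .n, .n, .b, .t => (E.emeet E.id (E.comp (E.comp E.G E.G) (E.emeet E.id E.G)))
  | .n, .n, .b, .f => (E.emeet E.id (E.ejoin E.G (E.comp E.G E.G)))
  | .n, .n, .b, .n => (E.ejoin (E.emeet E.id E.G) (E.emeet (E.comp E.G (E.emeet E.id E.G)) (E.comp E.G (E.comp E.G E.ct))))
  | .n, .n, .b, .b => (E.ejoin (E.emeet (E.emeet E.id E.G) (E.comp E.G E.ct)) (E.comp (E.emeet E.G (E.comp E.G E.G)) (E.emeet (E.emeet E.id E.G) (E.comp E.G E.ct))))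
  | .n, .b, .t, .t => (E.ejoin (E.emeet E.id (E.comp E.eneg E.G)) (E.comp (E.comp E.eneg E.G) (E.emeet E.eneg E.G)))
  | .n, .b, .t, .f => (E.emeet E.id (E.comp E.G (E.comp E.eneg E.G)))
  | .n, .b, .t, .n => (E.emeet (E.comp E.G (E.ejoin E.eneg E.G)) (E.comp (E.comp E.G E.eneg) (E.ejoin E.eneg E.G)))
  | .n, .b, .t, .b => (E.comp (E.emeet E.G (E.comp E.G E.eneg)) (E.ejoin E.G (E.comp E.G E.ct)))
  | .n, .b, .f, .t => (E.emeet E.id (E.comp E.eneg (E.comp E.G E.G)))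
  | .n, .b, .f, .f => (E.emeet E.id (E.ejoin E.G (E.comp E.G E.eneg)))
  | .n, .b, .f, .n => (E.emeet E.id (E.ejoin E.G (E.comp E.G E.eneg)))
  | .n, .b, .f, .b => (E.comp (E.ejoin E.eneg (E.comp E.G E.G)) (E.ejoin (E.comp E.eneg E.G) (E.comp E.G E.ct)))
  | .n, .b, .n, .t => (E.comp (E.emeet E.G (E.comp E.G E.eneg)) (E.ejoin (E.comp E.G E.eneg) (E.comp E.G E.cf)))
  | .n, .b, .n, .f => (E.comp E.eneg (E.comp (E.ejoin E.G (E.comp E.G E.eneg)) (E.emeet (E.comp E.G E.eneg) (E.comp E.G E.cf))))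
  | .n, .b, .n, .n => (E.emeet (E.ejoin (E.emeet E.id E.G) (E.comp E.G E.eneg)) (E.comp (E.ejoin E.id E.G) (E.emeet (E.comp E.G E.eneg) (E.comp E.G E.cf))))
  | .n, .b, .b, .t => (E.ejoin (E.emeet E.id (E.comp E.eneg E.G)) (E.comp (E.emeet E.eneg E.G) (E.comp E.G E.G)))
  | .n, .b, .b, .f => (E.emeet E.id (E.ejoin E.G (E.comp E.G E.eneg)))
  | .n, .b, .b, .n => (E.emeet E.id (E.ejoin E.G (E.comp E.G E.eneg)))
  | .n, .b, .b, .b => (E.ejoin (E.emeet E.G (E.comp E.G E.ct)) (E.comp (E.emeet E.G (E.comp E.G E.eneg)) (E.emeet E.G (E.comp E.G E.ct))))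
  | .b, .t, .t, .t => (E.ejoin E.id (E.comp (E.comp E.eneg E.G) (E.comp E.G E.eneg)))
  | .b, .t, .t, .f => (E.comp (E.comp E.eneg E.G) (E.emeet E.id E.G))
  | .b, .t, .t, .n => (E.comp (E.emeet E.eneg E.G) (E.comp (E.emeet E.id E.G) (E.ejoin E.eneg E.G)))
  | .b, .t, .f, .t => (E.ejoin E.id (E.comp E.eneg E.G))
  | .b, .t, .f, .f => (E.emeet E.id (E.comp E.G E.eneg))
  | .b, .t, .f, .n => (E.emeet E.id (E.comp E.G E.eneg))
  | .b, .t, .f, .b => (E.ejoin E.id (E.comp E.eneg E.G))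
  | .b, .t, .n, .t => (E.ejoin E.id (E.comp (E.comp E.eneg E.G) (E.ejoin E.id (E.comp E.G E.ct))))
  | .b, .t, .n, .f => (E.comp (E.comp E.eneg E.G) (E.emeet (E.emeet E.id E.G) (E.comp E.G E.ct)))
  | .b, .t, .n, .n => (E.comp (E.ejoin E.id (E.comp E.eneg E.G)) (E.emeet (E.emeet E.id E.G) (E.comp E.G E.ct)))
  | .b, .t, .b, .t => (E.ejoin E.id (E.comp E.eneg E.G))
  | .b, .t, .b, .f => (E.emeet E.id (E.comp E.G E.eneg))
  | .b, .t, .b, .n => (E.emeet E.id (E.comp E.G E.eneg))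
  | .b, .t, .b, .b => (E.ejoin E.id (E.comp E.eneg E.G))
  | .b, .f, .t, .t => (E.comp (E.comp E.G E.eneg) (E.ejoin E.eneg E.G))
  | .b, .f, .t, .f => (E.ejoin E.id E.G)
  | .b, .f, .t, .n => (E.emeet E.id (E.comp E.eneg (E.comp E.G E.eneg)))
  | .b, .f, .t, .b => (E.ejoin E.id E.G)
  | .b, .f, .f, .t => (E.comp (E.comp E.G E.eneg) (E.ejoin E.eneg E.G))
  | .b, .f, .f, .f => (E.ejoin E.id (E.comp (E.comp E.G E.eneg) (E.comp E.G E.eneg)))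
  | .b, .f, .f, .n => (E.ejoin (E.emeet E.id E.G) (E.comp E.G E.G))
  | .b, .f, .n, .t => (E.comp (E.comp E.G E.eneg) (E.ejoin (E.ejoin E.eneg E.G) (E.comp E.G E.ct)))
  | .b, .f, .n, .f => (E.ejoin E.id (E.comp E.G (E.ejoin E.id (E.comp E.G E.ct))))
  | .b, .f, .n, .n => (E.comp (E.ejoin E.id E.G) (E.emeet E.G (E.comp E.G E.ct)))
  | .b, .f, .b, .t => (E.comp (E.comp E.G E.eneg) (E.ejoin E.eneg E.G))
  | .b, .f, .b, .f => (E.ejoin E.id E.G)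
  | .b, .f, .b, .n => (E.comp (E.ejoin E.id E.G) (E.emeet E.id E.G))
  | .b, .f, .b, .b => (E.ejoin E.id E.G)
  | .b, .n, .t, .t => (E.ejoin (E.emeet E.id (E.comp E.eneg E.G)) (E.comp (E.comp E.eneg E.G) (E.emeet E.eneg E.G)))
  | .b, .n, .t, .f => (E.emeet E.id (E.comp E.eneg (E.comp E.G E.G)))
  | .b, .n, .t, .n => (E.ejoin (E.emeet E.id (E.comp E.eneg E.G)) (E.comp (E.emeet E.eneg E.G) (E.comp E.G E.G)))
  | .b, .n, .t, .b => (E.comp (E.emeet E.G (E.comp E.G E.eneg)) (E.ejoin (E.comp E.G E.eneg) (E.comp E.G E.cf)))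
  | .b, .n, .f, .t => (E.emeet E.id (E.comp E.G (E.comp E.eneg E.G)))
  | .b, .n, .f, .f => (E.emeet E.id (E.ejoin E.G (E.comp E.G E.eneg)))
  | .b, .n, .f, .n => (E.emeet E.id (E.ejoin E.G (E.comp E.G E.eneg)))
  | .b, .n, .f, .b => (E.comp E.eneg (E.comp (E.ejoin E.G (E.comp E.G E.eneg)) (E.emeet (E.comp E.G E.eneg) (E.comp E.G E.cf))))
  | .b, .n, .n, .t => (E.comp (E.emeet E.G (E.comp E.G E.eneg)) (E.ejoin E.G (E.comp E.G E.ct)))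
  | .b, .n, .n, .f => (E.comp (E.ejoin E.eneg (E.comp E.G E.G)) (E.ejoin (E.comp E.eneg E.G) (E.comp E.G E.ct)))
  | .b, .n, .n, .n => (E.ejoin (E.emeet E.G (E.comp E.G E.ct)) (E.comp (E.emeet E.G (E.comp E.G E.eneg)) (E.emeet E.G (E.comp E.G E.ct))))
  | .b, .n, .b, .t => (E.emeet (E.comp E.G (E.ejoin E.eneg E.G)) (E.comp (E.comp E.G E.eneg) (E.ejoin E.eneg E.G)))
  | .b, .n, .b, .f => (E.emeet E.id (E.ejoin E.G (E.comp E.G E.eneg)))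
  | .b, .n, .b, .n => (E.emeet E.id (E.ejoin E.G (E.comp E.G E.eneg)))
  | .b, .n, .b, .b => (E.emeet (E.ejoin (E.emeet E.id E.G) (E.comp E.G E.eneg)) (E.comp (E.ejoin E.id E.G) (E.emeet (E.comp E.G E.eneg) (E.comp E.G E.cf))))
  | .b, .b, .t, .t => (E.ejoin E.id (E.comp E.eneg (E.comp E.G E.G)))
  | .b, .b, .t, .f => (E.ejoin E.id (E.comp E.G E.G))
  | .b, .b, .t, .n => (E.emeet E.id (E.comp (E.comp E.G E.G) (E.emeet E.id E.G)))
  | .b, .b, .f, .t => (E.ejoin E.id (E.comp E.eneg (E.comp E.G E.G)))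
  | .b, .b, .f, .f => (E.ejoin E.id (E.comp E.G E.G))
  | .b, .b, .f, .n => (E.emeet E.id (E.ejoin E.G (E.comp E.G E.G)))
  | .b, .b, .n, .t => (E.ejoin E.id (E.comp (E.comp E.eneg E.G) (E.ejoin E.id (E.comp E.G E.ct))))
  | .b, .b, .n, .f => (E.ejoin E.id (E.comp E.G (E.ejoin E.id (E.comp E.G E.ct))))
  | .b, .b, .n, .n => (E.ejoin (E.emeet (E.emeet E.id E.G) (E.comp E.G E.ct)) (E.comp (E.emeet E.G (E.comp E.G E.G)) (E.emeet (E.emeet E.id E.G) (E.comp E.G E.ct))))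
  | .b, .b, .b, .t => (E.ejoin E.id (E.comp (E.comp E.eneg E.G) (E.ejoin E.id E.G)))
  | .b, .b, .b, .f => (E.ejoin E.id (E.comp E.G (E.ejoin E.id E.G)))
  | .b, .b, .b, .n => (E.ejoin (E.emeet E.id E.G) (E.emeet (E.comp E.G (E.emeet E.id E.G)) (E.comp E.G (E.comp E.G E.ct))))
  | _, _, _, _ => E.id

def pickB : DM4 → DM4 → DM4 → DM4 → E
  | .t, .t, .f, .f => (E.emeet E.id E.G)
  | .t, .t, .b, .n => (E.emeet E.id E.G)
  | .t, .f, .t, .t => (E.comp E.eneg (E.comp E.G E.eneg))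
  | .t, .f, .f, .f => E.G
  | .t, .f, .b, .n => (E.emeet E.id E.G)
  | .f, .t, .t, .t => (E.comp E.eneg E.G)
  | .f, .t, .f, .f => (E.comp E.G E.eneg)
  | .f, .t, .b, .n => (E.emeet E.id (E.comp E.eneg E.G))
  | .f, .f, .t, .t => (E.emeet E.id (E.comp E.eneg E.G))
  | .f, .f, .b, .n => (E.emeet E.id (E.comp E.eneg E.G))
  | _, _, _, _ => E.id

theorem keyA : ∀ vt vf vn vb : DM4, pers1 (tbl vt vf vn vb) ∨
    (∀ a, E.eval (tbl vt vf vn vb) (pickA vt vf vn vb) a = box a) ∨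
    (∀ a, E.eval (tbl vt vf vn vb) (pickA vt vf vn vb) a = idnt a) ∨
    (∀ a, E.eval (tbl vt vf vn vb) (pickA vt vf vn vb) a = idbt a) := by decide

theorem keyB : ∀ vt vf vn vb : DM4, pers1 (tbl vt vf vn vb) ∨ ¬ harm1 (tbl vt vf vn vb) ∨
    (∀ a, E.eval (tbl vt vf vn vb) (pickB vt vf vn vb) a = box a) := by decide


/-- A clone above DMA contains a unary non-persistent function
iff it contains □, id_{n↦t}, or id_{b↦t}; it contains a unary harmonious
non-persistent function iff it contains □. -/
theorem unary_non_persistent (C : ∀ k : ℕ, Set (DMFun k))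
    (hC : IsClone C) (hDMA : ∀ k g, InClone DMAGen k g → g ∈ C k) :
    ((∃ g ∈ C 0, ¬ Persistent g) ↔
      (toF1 box ∈ C 0 ∨ toF1 idnt ∈ C 0 ∨ toF1 idbt ∈ C 0)) ∧
    ((∃ g ∈ C 0, Harmonious g ∧ ¬ Persistent g) ↔ toF1 box ∈ C 0)  := by
  have hxeq : ∀ x : Fin 1 → DM4, (fun _ : Fin 1 => x 0) = x := by
    intro x; funext i
    have : i = 0 := by omega
    rw [this]
  have npbox : ¬ Persistent (toF1 box) := fun hp =>
    absurd (hp (fun _ => DM4.n) (fun _ => DM4.t) (fun _ => Or.inr (Or.inl rfl)))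
      (by decide : ¬ ile DM4.f DM4.t)
  constructor
  · constructor
    · rintro ⟨g, hg, hnp⟩
      have hToF1 : toF1 (fun a => g (fun _ => a)) = g := by
        funext x; show g (fun _ => x 0) = g x; rw [hxeq]
      have hg' : toF1 (fun a => g (fun _ => a)) ∈ C 0 := by rw [hToF1]; exact hg
      have hnp1 : ¬ pers1 (fun a => g (fun _ => a)) := fun hp => hnp (fun x y hxy => by
        have h2 := hp (x 0) (y 0) (hxy 0)
        dsimp only at h2
        rwa [hxeq x, hxeq y] at h2)
      have e' : (fun a => g (fun _ => a)) =
          tbl (g (fun _ => DM4.t)) (g (fun _ => DM4.f)) (g (fun _ => DM4.n)) (g (fun _ => DM4.b)) := by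
        funext a; cases a <;> rfl
      rcases keyA (g (fun _ => DM4.t)) (g (fun _ => DM4.f)) (g (fun _ => DM4.n)) (g (fun _ => DM4.b))
        with hp | h | h | h
      · rw [← e'] at hp; exact absurd hp hnp1
      · have hm := memEval hC hDMA _ hg' (pickA (g (fun _ => DM4.t)) (g (fun _ => DM4.f)) (g (fun _ => DM4.n)) (g (fun _ => DM4.b)))
        rw [e'] at hm
        exact Or.inl (memCongr h hm)
      · have hm := memEval hC hDMA _ hg' (pickA (g (fun _ => DM4.t)) (g (fun _ => DM4.f)) (g (fun _ => DM4.n)) (g (fun _ => DM4.b)))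
        rw [e'] at hm
        exact Or.inr (Or.inl (memCongr h hm))
      · have hm := memEval hC hDMA _ hg' (pickA (g (fun _ => DM4.t)) (g (fun _ => DM4.f)) (g (fun _ => DM4.n)) (g (fun _ => DM4.b)))
        rw [e'] at hm
        exact Or.inr (Or.inr (memCongr h hm))
    · rintro (h | h | h)
      · exact ⟨toF1 box, h, npbox⟩
      · exact ⟨toF1 idnt, h, fun hp =>
          absurd (hp (fun _ => DM4.n) (fun _ => DM4.f) (fun _ => Or.inr (Or.inl rfl)))
            (by decide : ¬ ile DM4.t DM4.f)⟩
      · exact ⟨toF1 idbt, h, fun hp =>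
          absurd (hp (fun _ => DM4.f) (fun _ => DM4.b) (fun _ => Or.inr (Or.inr rfl)))
            (by decide : ¬ ile DM4.f DM4.t)⟩
  · constructor
    · rintro ⟨g, hg, hH, hnp⟩
      have hToF1 : toF1 (fun a => g (fun _ => a)) = g := by
        funext x; show g (fun _ => x 0) = g x; rw [hxeq]
      have hg' : toF1 (fun a => g (fun _ => a)) ∈ C 0 := by rw [hToF1]; exact hg
      have hnp1 : ¬ pers1 (fun a => g (fun _ => a)) := fun hp => hnp (fun x y hxy => by
        have h2 := hp (x 0) (y 0) (hxy 0)
        dsimp only at h2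
        rwa [hxeq x, hxeq y] at h2)
      have hh1 : harm1 (fun a => g (fun _ => a)) := fun a => hH (fun _ => a)
      have e' : (fun a => g (fun _ => a)) =
          tbl (g (fun _ => DM4.t)) (g (fun _ => DM4.f)) (g (fun _ => DM4.n)) (g (fun _ => DM4.b)) := by
        funext a; cases a <;> rfl
      rcases keyB (g (fun _ => DM4.t)) (g (fun _ => DM4.f)) (g (fun _ => DM4.n)) (g (fun _ => DM4.b))
        with hp | hnh | h
      · rw [← e'] at hp; exact absurd hp hnp1
      · rw [← e'] at hnh; exact absurd hh1 hnh
      · have hm := memEval hC hDMA _ hg' (pickB (g (fun _ => DM4.t)) (g (fun _ => DM4.f)) (g (fun _ => DM4.n)) (g (fun _ => DM4.b)))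
        rw [e'] at hm
        exact memCongr h hm
    · intro h
      exact ⟨toF1 box, h,
        fun x => (by decide : ∀ a, box (conf a) = conf (box a)) (x 0), npbox⟩

end DM4
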